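/- Let b = λ + iη with λ, η ∈ ℝ and λ > 0. The complementary Romanovski–Routh polynomials 𝒫ₙ(b;x), defined by the recurrence 𝒫₀(b;x) = 1, 𝒫₁(b;x) = x − c₁, and 𝒫ₙ₊₁(b;x) = (x − cₙ₊₁)𝒫ₙ(b;x) − dₙ₊₁(x² + 1)𝒫ₙ₋₁(b;x) for n ≥ 1, where cₙ = η/(λ+n−1) and dₙ₊₁ = n(2λ+n−1)/(4(λ+n−1)(λ+n)), satisfy for all n ≥ 1 and all x the closed-form hypergeometric expression 𝒫ₙ(b;x) = ((x−i)ⁿ/2ⁿ) · ((2λ)ₙ/(λ)ₙ) · Σ_{k=0}^{n} [(−n)ₖ(b)ₖ/((2λ)ₖ k!)] (−2i/(x−i))ᵏ. -/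

import Mathlib

set_option maxHeartbeats 1000000

open Complex Finset

/-- Pochhammer symbol `(a)ₖ` over ℂ. -/
noncomputable def poch (a : ℂ) (k : ℕ) : ℂ := Polynomial.eval a (ascPochhammer ℂ k)

/-- Complementary Romanovski–Routh polynomials `𝒫ₙ(b;x)` with `b = λ + iη`,
defined by the three-term recurrence, evaluated at complex `x`. -/
noncomputable def crr (lam eta : ℝ) : ℕ → ℂ → ℂ
  | 0, _ => 1
  | 1, x => x - ((eta / lam : ℝ) : ℂ)
  | n + 2, x =>
      (x - ((eta / (lam + n + 1) : ℝ) : ℂ)) * crr lam eta (n + 1) x -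
        (((n + 1) * (2 * lam + n) / (4 * (lam + n) * (lam + n + 1)) : ℝ) : ℂ) *
          (x ^ 2 + 1) * crr lam eta n x

lemma poch_zero (a : ℂ) : poch a 0 = 1 := by simp [poch]

lemma poch_succ (a : ℂ) (k : ℕ) : poch a (k + 1) = poch a k * (a + k) :=
  ascPochhammer_succ_eval k a

lemma poch_succ_left (a : ℂ) (k : ℕ) : poch a (k + 1) = a * poch (a + 1) k := by
  simp [poch, ascPochhammer_succ_left, Polynomial.eval_comp]

lemma poch_neg_shift (a : ℂ) (j : ℕ) : poch (-(a+1)) (j+1) = (-(a+1)) * poch (-a) j := by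
  rw [poch_succ_left, show -(a+1)+1 = -a by ring]

lemma poch_rel (m : ℂ) (j : ℕ) :
    ((j : ℂ) - m - 1) * poch (-m - 1) j = (-m - 1) * poch (-m) j := by
  have h1 := poch_succ (-m - 1) j
  have h2 : poch (-m - 1) (j + 1) = (-m - 1) * poch (-m) j := by
    rw [show (-m - 1 : ℂ) = -(m + 1) by ring, poch_neg_shift]
  linear_combination h2 - h1

lemma poch_real_pos_ne (r : ℝ) (hr : 0 < r) (k : ℕ) : poch (r : ℂ) k ≠ 0 := by
  induction k with
  | zero => simp [poch_zero]
  | succ k ih =>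
      rw [poch_succ]
      refine mul_ne_zero ih ?_
      have : ((r : ℂ) + k) = ((r + k : ℝ) : ℂ) := by push_cast; ring
      rw [this, Complex.ofReal_ne_zero]
      positivity

lemma poch_neg_nat_eq_zero (m k : ℕ) (h : m < k) : poch (-(m : ℂ)) k = 0 := by
  induction k with
  | zero => omega
  | succ k ih =>
      rw [poch_succ]
      rcases Nat.lt_succ_iff_lt_or_eq.mp h with h' | h'
      · rw [ih h', zero_mul]
      · subst h'; simp

noncomputable def A (lam eta : ℝ) (m k : ℕ) : ℂ :=
  poch (-(m : ℂ)) k * poch ((lam : ℂ) + (eta : ℂ) * I) k /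
    (poch (2 * (lam : ℂ)) k * (Nat.factorial k : ℂ))

/-- shifted coefficients -/
noncomputable def Ash (lam eta : ℝ) (m : ℕ) : ℕ → ℂ
  | 0 => 0
  | k + 1 => A lam eta m k

lemma A_zero (lam eta : ℝ) (m : ℕ) : A lam eta m 0 = 1 := by
  simp [A, poch_zero]

lemma A_eq_zero (lam eta : ℝ) (m k : ℕ) (h : m < k) : A lam eta m k = 0 := by
  simp [A, poch_neg_nat_eq_zero m k h]

section
variable (lam eta : ℝ) (hlam : 0 < lam)

lemma coeffLemma (hlam : 0 < lam) (n k : ℕ) :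
    (2*(lam:ℂ)+n) * (2*(lam:ℂ)+n+1) * A lam eta (n+2) k
      = 2*((lam:ℂ)+n+1)*(2*(lam:ℂ)+n) * A lam eta (n+1) k
        - ((lam:ℂ)+(eta:ℂ)*I+n+1)*(2*(lam:ℂ)+n) * Ash lam eta (n+1) k
        + ((n:ℂ)+1)*(2*(lam:ℂ)+n) * Ash lam eta n k
        - ((n:ℂ)+1)*(2*(lam:ℂ)+n) * A lam eta n k := by
  match k with
  | 0 => simp only [A_zero, Ash]; ring
  | j + 1 =>
    have hT : poch (2*(lam:ℂ)) j ≠ 0 := by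
      have : (2*(lam:ℂ)) = ((2*lam : ℝ) : ℂ) := by push_cast; ring
      rw [this]; exact poch_real_pos_ne _ (by linarith) j
    have hTj : (2*(lam:ℂ) + j) ≠ 0 := by
      have : (2*(lam:ℂ) + j) = ((2*lam + j : ℝ) : ℂ) := by push_cast; ring
      rw [this, Complex.ofReal_ne_zero]; positivity
    have hF : ((Nat.factorial j : ℕ) : ℂ) ≠ 0 := by
      exact_mod_cast Nat.factorial_ne_zero j
    have hj1 : ((j:ℂ) + 1) ≠ 0 := Nat.cast_add_one_ne_zero j
    have hn1 : (-(n:ℂ) - 1) ≠ 0 := by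
      have h := Nat.cast_add_one_ne_zero (R := ℂ) n
      intro h'; apply h; linear_combination -h'
    have eb := poch_succ ((lam:ℂ)+(eta:ℂ)*I) j
    have eT := poch_succ (2*(lam:ℂ)) j
    have hA2 : A lam eta (n+2) (j+1)
        = (-(n:ℂ)-2) * poch (-(n:ℂ)-1) j * (((lam:ℂ)+(eta:ℂ)*I) + j) *
          (poch ((lam:ℂ)+(eta:ℂ)*I) j / (poch (2*(lam:ℂ)) (j+1) * (Nat.factorial (j+1) : ℂ))) := by
      simp only [A]
      rw [show (-(((n:ℕ)+2 : ℕ) : ℂ)) = -(((n:ℂ)+1)+1) by push_cast; ring, poch_neg_shift,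
        show (-((n:ℂ)+1)) = -(n:ℂ)-1 by ring, eb]
      ring
    have hA1 : A lam eta (n+1) (j+1)
        = (-(n:ℂ)-1) * poch (-(n:ℂ)) j * (((lam:ℂ)+(eta:ℂ)*I) + j) *
          (poch ((lam:ℂ)+(eta:ℂ)*I) j / (poch (2*(lam:ℂ)) (j+1) * (Nat.factorial (j+1) : ℂ))) := by
      simp only [A]
      rw [show (-(((n:ℕ)+1 : ℕ) : ℂ)) = -((n:ℂ)+1) by push_cast; ring, poch_neg_shift, eb]
      ring
    have hA0 : A lam eta n (j+1)
        = poch (-(n:ℂ)) j * (-(n:ℂ)+j) * (((lam:ℂ)+(eta:ℂ)*I) + j) *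
          (poch ((lam:ℂ)+(eta:ℂ)*I) j / (poch (2*(lam:ℂ)) (j+1) * (Nat.factorial (j+1) : ℂ))) := by
      simp only [A]
      rw [poch_succ, eb]
      ring
    have hfac : ((Nat.factorial (j+1) : ℕ) : ℂ) = ((j:ℂ)+1) * (Nat.factorial j : ℂ) := by
      rw [Nat.factorial_succ]; push_cast; ring
    have hB1 : A lam eta (n+1) j
        = poch (-(n:ℂ)-1) j * ((2*(lam:ℂ)+j)*((j:ℂ)+1)) *
          (poch ((lam:ℂ)+(eta:ℂ)*I) j / (poch (2*(lam:ℂ)) (j+1) * (Nat.factorial (j+1) : ℂ))) := by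
      simp only [A]
      rw [show (-(((n:ℕ)+1 : ℕ) : ℂ)) = -(n:ℂ)-1 by push_cast; ring, eT, hfac]
      rw [← mul_div_mul_left _ _ (mul_ne_zero hTj hj1)]
      ring
    have hB0 : A lam eta n j
        = poch (-(n:ℂ)) j * ((2*(lam:ℂ)+j)*((j:ℂ)+1)) *
          (poch ((lam:ℂ)+(eta:ℂ)*I) j / (poch (2*(lam:ℂ)) (j+1) * (Nat.factorial (j+1) : ℂ))) := by
      simp only [A]
      rw [eT, hfac]
      rw [← mul_div_mul_left _ _ (mul_ne_zero hTj hj1)]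
      ring
    simp only [Ash]
    rw [hA2, hA1, hA0, hB1, hB0]
    linear_combination ((2*(lam:ℂ)+n) *
        (2*((lam:ℂ)+n+1)*(((lam:ℂ)+(eta:ℂ)*I)+j) - (2*(lam:ℂ)+j)*((j:ℂ)+1)
          + ((j:ℂ)-n)*(((lam:ℂ)+(eta:ℂ)*I)+j)) *
        (poch ((lam:ℂ)+(eta:ℂ)*I) j / (poch (2*(lam:ℂ)) (j+1) * (Nat.factorial (j+1) : ℂ)))) *
      poch_rel (n:ℂ) j

lemma Ash_eq_zero (lam eta : ℝ) (m k : ℕ) (h : m + 1 < k) : Ash lam eta m k = 0 := by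
  match k with
  | 0 => simp at h
  | k + 1 => simp only [Ash]; exact A_eq_zero lam eta m k (by omega)

noncomputable def Sig (lam eta : ℝ) (m : ℕ) (z : ℂ) : ℂ :=
  ∑ k ∈ Finset.range (m+1), A lam eta m k * z^k

lemma shiftL (lam eta : ℝ) (m N : ℕ) (z : ℂ) :
    z * ∑ k ∈ Finset.range N, A lam eta m k * z^k
      = ∑ k ∈ Finset.range (N+1), Ash lam eta m k * z^k := by
  rw [Finset.mul_sum, Finset.sum_range_succ']
  simp only [Ash, pow_zero, zero_mul, add_zero]
  exact Finset.sum_congr rfl fun k _ => by ring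

lemma extendA (lam eta : ℝ) (m N : ℕ) (h : m + 1 ≤ N) (z : ℂ) :
    ∑ k ∈ Finset.range N, A lam eta m k * z^k = Sig lam eta m z := by
  rw [Sig]
  symm
  apply Finset.sum_subset (Finset.range_subset_range.mpr h)
  intro k _ hk
  rw [A_eq_zero lam eta m k (by simp only [Finset.mem_range] at hk; omega), zero_mul]

lemma extendAsh (lam eta : ℝ) (m N : ℕ) (h : m + 2 ≤ N) (z : ℂ) :
    ∑ k ∈ Finset.range N, Ash lam eta m k * z^k
      = ∑ k ∈ Finset.range (m+2), Ash lam eta m k * z^k := by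
  symm
  apply Finset.sum_subset (Finset.range_subset_range.mpr h)
  intro k _ hk
  rw [Ash_eq_zero lam eta m k (by simp only [Finset.mem_range] at hk; omega), zero_mul]

lemma KM (lam eta : ℝ) (hlam : 0 < lam) (n : ℕ) (z : ℂ) :
    (2*(lam:ℂ)+n)*(2*(lam:ℂ)+n+1) * Sig lam eta (n+2) z
      = 2*((lam:ℂ)+n+1)*(2*(lam:ℂ)+n) * Sig lam eta (n+1) z
        - ((lam:ℂ)+(eta:ℂ)*I+n+1)*(2*(lam:ℂ)+n) * (z * Sig lam eta (n+1) z)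
        + ((n:ℂ)+1)*(2*(lam:ℂ)+n) * (z * Sig lam eta n z)
        - ((n:ℂ)+1)*(2*(lam:ℂ)+n) * Sig lam eta n z := by
  have h2 : z * Sig lam eta (n+1) z = ∑ k ∈ Finset.range (n+3), Ash lam eta (n+1) k * z^k := by
    rw [Sig]; exact shiftL lam eta (n+1) (n+2) z
  have h4 : z * Sig lam eta n z = ∑ k ∈ Finset.range (n+3), Ash lam eta n k * z^k := by
    rw [Sig, shiftL lam eta n (n+1) z]
    exact (extendAsh lam eta n (n+3) (by omega) z).symm
  have h1 : Sig lam eta (n+1) z = ∑ k ∈ Finset.range (n+3), A lam eta (n+1) k * z^k :=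
    (extendA lam eta (n+1) (n+3) (by omega) z).symm
  have h3 : Sig lam eta n z = ∑ k ∈ Finset.range (n+3), A lam eta n k * z^k :=
    (extendA lam eta n (n+3) (by omega) z).symm
  rw [h2, h4, h1, h3, Sig]
  rw [Finset.mul_sum, Finset.mul_sum, Finset.mul_sum, Finset.mul_sum, Finset.mul_sum]
  rw [← Finset.sum_sub_distrib, ← Finset.sum_add_distrib, ← Finset.sum_sub_distrib]
  exact Finset.sum_congr rfl fun k _ => by
    linear_combination (z^k) * coeffLemma lam eta hlam n k


lemma poch_one (a : ℂ) : poch a 1 = a := by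
  simpa [poch_zero] using poch_succ a 0

lemma mainInd (lam eta : ℝ) (hlam : 0 < lam) (x : ℂ) (hx : x ≠ I) (m : ℕ) :
    2^m * poch (lam:ℂ) m * crr lam eta m x
      = (x - I)^m * poch (2*(lam:ℂ)) m * Sig lam eta m (-2*I/(x-I)) := by
  have hz : x - I ≠ 0 := sub_ne_zero.mpr hx
  have hl : (lam:ℂ) ≠ 0 := Complex.ofReal_ne_zero.mpr (ne_of_gt hlam)
  induction m using Nat.twoStepInduction with
  | zero => simp [crr, Sig, poch_zero, A_zero]
  | one =>
      simp only [crr, Sig, Finset.sum_range_succ, Finset.sum_range_zero, A_zero, pow_zero,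
        pow_one, zero_add, poch_one]
      have hA11 : A lam eta 1 1 = -((lam:ℂ) + (eta:ℂ)*I) / (2*(lam:ℂ)) := by
        simp [A, poch_one]
      rw [hA11]
      push_cast
      field_simp
      ring_nf
      linear_combination (norm := ring_nf) (-(eta:ℂ)) * Complex.I_mul_I
  | more n ih0 ih1 =>
      have hP1 : poch (lam:ℂ) (n+1) = poch (lam:ℂ) n * ((lam:ℂ)+n) := by
        rw [poch_succ]
      have hP2 : poch (lam:ℂ) (n+2) = poch (lam:ℂ) n * ((lam:ℂ)+n) * ((lam:ℂ)+n+1) := by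
        rw [poch_succ, hP1]; push_cast; ring
      have hT1 : poch (2*(lam:ℂ)) (n+1) = poch (2*(lam:ℂ)) n * (2*(lam:ℂ)+n) := by
        rw [poch_succ]
      have hT2 : poch (2*(lam:ℂ)) (n+2)
          = poch (2*(lam:ℂ)) n * (2*(lam:ℂ)+n) * (2*(lam:ℂ)+n+1) := by
        rw [poch_succ, hT1]; push_cast; ring
      have hcr : ((lam:ℂ)+n+1) * ((eta / (lam + n + 1) : ℝ) : ℂ) = (eta:ℂ) := by
        have h : ((lam + (n:ℝ) + 1) * (eta / (lam + (n:ℝ) + 1)) : ℝ) = eta := by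
          have : (lam + (n:ℝ) + 1) ≠ 0 := by positivity
          field_simp
        calc ((lam:ℂ)+n+1) * ((eta / (lam + n + 1) : ℝ) : ℂ)
            = (((lam + (n:ℝ) + 1) * (eta / (lam + (n:ℝ) + 1)) : ℝ) : ℂ) := by push_cast; ring
          _ = (eta:ℂ) := by rw [h]
      have hdr : 4*((lam:ℂ)+n)*((lam:ℂ)+n+1) *
            (((n + 1) * (2 * lam + n) / (4 * (lam + n) * (lam + n + 1)) : ℝ) : ℂ)
          = ((n:ℂ)+1)*(2*(lam:ℂ)+n) := by
        have h : ((4 * (lam + (n:ℝ)) * (lam + (n:ℝ) + 1)) *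
              (((n:ℝ) + 1) * (2 * lam + (n:ℝ)) / (4 * (lam + (n:ℝ)) * (lam + (n:ℝ) + 1))) : ℝ)
            = ((n:ℝ) + 1) * (2 * lam + (n:ℝ)) := by
          have h1 : (lam + (n:ℝ)) ≠ 0 := by positivity
          have h2 : (lam + (n:ℝ) + 1) ≠ 0 := by positivity
          field_simp
        calc 4*((lam:ℂ)+n)*((lam:ℂ)+n+1) *
              (((n + 1) * (2 * lam + n) / (4 * (lam + n) * (lam + n + 1)) : ℝ) : ℂ)
            = (((4 * (lam + (n:ℝ)) * (lam + (n:ℝ) + 1)) *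
              (((n:ℝ) + 1) * (2 * lam + (n:ℝ)) / (4 * (lam + (n:ℝ)) * (lam + (n:ℝ) + 1)))
                : ℝ) : ℂ) := by push_cast; ring
          _ = ((n:ℂ)+1)*(2*(lam:ℂ)+n) := by rw [h]; push_cast; ring
      have hzz : (-2*I/(x-I)) * (x-I) = -2*I := div_mul_cancel₀ _ hz
      have hKM := KM lam eta hlam n (-2*I/(x-I))
      rw [hP1, hT1] at ih1
      rw [crr, hP2, hT2]
      linear_combination (2*((lam:ℂ)+n+1)*(x - ((eta / (lam + n + 1) : ℝ) : ℂ))) * ih1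
        + (-4*((lam:ℂ)+n)*((lam:ℂ)+n+1) *
            (((n + 1) * (2 * lam + n) / (4 * (lam + n) * (lam + n + 1)) : ℝ) : ℂ) * (x^2+1)) * ih0
        + (-((x-I)^n) * poch (2*(lam:ℂ)) n * (x-I)^2) * hKM
        + (((lam:ℂ)+(eta:ℂ)*I+n+1)*(x-I)*((x-I)^n)*poch (2*(lam:ℂ)) n*(2*(lam:ℂ)+n) *
              Sig lam eta (n+1) (-2*I/(x-I))
            - ((n:ℂ)+1)*(2*(lam:ℂ)+n)*(x-I)*((x-I)^n)*poch (2*(lam:ℂ)) n *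
              Sig lam eta n (-2*I/(x-I))) * hzz
        + (-2*(eta:ℂ)*(x-I)*((x-I)^n)*poch (2*(lam:ℂ)) n*(2*(lam:ℂ)+n) *
              Sig lam eta (n+1) (-2*I/(x-I))
            - ((n:ℂ)+1)*(2*(lam:ℂ)+n)*((x-I)^n)*poch (2*(lam:ℂ)) n *
              Sig lam eta n (-2*I/(x-I))) * Complex.I_mul_I
        + (-2*(x-I)*((x-I)^n)*poch (2*(lam:ℂ)) n*(2*(lam:ℂ)+n) *
            Sig lam eta (n+1) (-2*I/(x-I))) * hcr
        + (-(x^2+1)*((x-I)^n)*poch (2*(lam:ℂ)) n * Sig lam eta n (-2*I/(x-I))) * hdr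


theorem stmt0 (lam eta : ℝ) (hlam : 0 < lam) (n : ℕ) (hn : 1 ≤ n)
    (x : ℂ) (hx : x ≠ I) :
    crr lam eta n x =
      ((x - I) ^ n / 2 ^ n) * (poch (2 * lam) n / poch (lam : ℂ) n) *
        ∑ k ∈ Finset.range (n + 1),
          poch (-(n : ℂ)) k * poch ((lam : ℂ) + (eta : ℂ) * I) k /
              (poch (2 * lam) k * (Nat.factorial k : ℂ)) *
            (-2 * I / (x - I)) ^ k := by
  have h := mainInd lam eta hlam x hx n
  have hz : x - I ≠ 0 := sub_ne_zero.mpr hx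
  have hp : poch (lam:ℂ) n ≠ 0 := poch_real_pos_ne lam hlam n
  have h2 : (2:ℂ)^n ≠ 0 := pow_ne_zero n two_ne_zero
  rw [show (∑ k ∈ Finset.range (n + 1),
      poch (-(n : ℂ)) k * poch ((lam : ℂ) + (eta : ℂ) * I) k /
        (poch (2 * lam) k * (Nat.factorial k : ℂ)) * (-2 * I / (x - I)) ^ k)
      = Sig lam eta n (-2*I/(x-I)) from rfl]
  rw [show ((-2*I/(x-I)) : ℂ) = -(2*I)/(x-I) from by ring] at h ⊢
  field_simp
  rw [show -(I * 2 / (x - I)) = -(2 * I) / (x - I) by ring]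
  linear_combination h
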